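/- Let d : [0,1] → ℝ be piecewise Lipschitz: there exist points 0 = π_0 < π_1 < … < π_L < π_{L+1} = 1 such that the restriction of d to [π_l, π_{l+1}) is Lipschitz for l = 0,…,L−1 and the restriction of d to [π_L, 1] is Lipschitz. For integers 2 ≤ B < T and 2 ≤ t ≤ T write Δd_t = d(t/T) − d((t−1)/T). Then there exists a constant M < ∞, depending only on d, such that for all integers 2 ≤ B < T and all integers 1 ≤ s ≤ B: Σ_{r=1}^{B} | Σ_{j=1}^{T−B} Δd_{r+j} Δd_{s+j} | ≤ M. -/

import Mathlib

open Filter Finset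

noncomputable section

/-- A function `d : ℝ → ℝ` is piecewise Lipschitz on `[0,1]`: there are breakpoints
`0 = π 0 < π 1 < … < π L < π (L+1) = 1` such that `d` is Lipschitz on each `[π l, π (l+1))`
for `l < L` and on `[π L, 1]`. -/
def PiecewiseLipschitz (d : ℝ → ℝ) : Prop :=
  ∃ (L : ℕ) (π : ℕ → ℝ), π 0 = 0 ∧ π (L + 1) = 1 ∧
    (∀ l, l ≤ L → π l < π (l + 1)) ∧
    (∀ l, l < L → ∃ C : NNReal, LipschitzOnWith C d (Set.Ico (π l) (π (l + 1)))) ∧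
    (∃ C : NNReal, LipschitzOnWith C d (Set.Icc (π L) 1))


/-- deterministic auxiliary bound: for a piecewise Lipschitz trend `d` there
is a constant `M` with `Σ_{r=1}^B |Σ_{j=1}^{T-B} Δd_{r+j} Δd_{s+j}| ≤ M` for all
`2 ≤ B < T` and `1 ≤ s ≤ B`. -/
theorem statement15 (d : ℝ → ℝ) (hd : PiecewiseLipschitz d) :
    ∃ M : ℝ, ∀ B T : ℕ, 2 ≤ B → B < T → ∀ s : ℕ, 1 ≤ s → s ≤ B →
      ∑ r ∈ Finset.Icc 1 B,
          |∑ j ∈ Finset.Icc 1 (T - B),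
            (d (((r + j : ℕ) : ℝ) / (T : ℝ)) - d (((r + j - 1 : ℕ) : ℝ) / (T : ℝ))) *
              (d (((s + j : ℕ) : ℝ) / (T : ℝ)) - d (((s + j - 1 : ℕ) : ℝ) / (T : ℝ)))|
        ≤ M := by
  classical
  obtain ⟨L, π, h0, h1, hlt, hLip, CL, hIcc⟩ := hd
  have hnn : ∀ k, k ≤ L + 1 → 0 ≤ π k := by
    intro k
    induction k with
    | zero => intro _; rw [h0]
    | succ n ih =>
      intro hk
      exact le_of_lt (lt_of_le_of_lt (ih (by omega)) (hlt n (by omega)))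
  have hπL1 : π L ≤ 1 := by
    have := hlt L le_rfl
    rw [h1] at this
    exact this.le
  choose Cf hCf using hLip
  set CN : NNReal := CL ⊔ (Finset.range L).sup (fun l => if h : l < L then Cf l h else 0)
    with hCNdef
  have hC0 : (0:ℝ) ≤ (CN : ℝ) := CN.coe_nonneg
  have hdistL : ∀ x ∈ Set.Icc (π L) 1, ∀ y ∈ Set.Icc (π L) 1,
      |d x - d y| ≤ (CN : ℝ) * |x - y| := by
    intro x hx y hy
    have h := hIcc.dist_le_mul x hx y hy
    rw [Real.dist_eq, Real.dist_eq] at h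
    refine h.trans (mul_le_mul_of_nonneg_right ?_ (abs_nonneg _))
    exact_mod_cast (le_sup_left : CL ≤ CN)
  have hdistl : ∀ l (hl : l < L), ∀ x ∈ Set.Ico (π l) (π (l+1)), ∀ y ∈ Set.Ico (π l) (π (l+1)),
      |d x - d y| ≤ (CN : ℝ) * |x - y| := by
    intro l hl x hx y hy
    have h := (hCf l hl).dist_le_mul x hx y hy
    rw [Real.dist_eq, Real.dist_eq] at h
    refine h.trans (mul_le_mul_of_nonneg_right ?_ (abs_nonneg _))
    have h1' : Cf l hl ≤ (Finset.range L).sup (fun l => if h : l < L then Cf l h else 0) := by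
      have := Finset.le_sup (f := fun l => if h : l < L then Cf l h else 0)
        (Finset.mem_range.mpr hl)
      simpa [hl] using this
    exact_mod_cast h1'.trans le_sup_right
  -- boundedness
  set D0 : ℝ := (Finset.range (L+2)).sup' ⟨0, by simp⟩ (fun k => |d (π k)|) with hD0def
  have hD0nn : 0 ≤ D0 := le_trans (abs_nonneg (d (π 0)))
    (Finset.le_sup' (fun k => |d (π k)|) (by simp : 0 ∈ Finset.range (L+2)))
  set D : ℝ := D0 + (CN : ℝ) with hDdef
  have hDnn : 0 ≤ D := add_nonneg hD0nn hC0
  -- locate a point below π L in a half-open piece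
  have hloc : ∀ x : ℝ, 0 ≤ x → x < π L → ∃ l, l < L ∧ π l ≤ x ∧ x < π (l+1) := by
    intro x hx0 hxL
    have hLpos : 0 < L := by
      rcases Nat.eq_zero_or_pos L with h | h
      · exfalso; rw [h, h0] at hxL; linarith
      · exact h
    set F : Finset ℕ := (Finset.range L).filter (fun k => π k ≤ x) with hF
    have h0F : 0 ∈ F := by
      simp only [hF, Finset.mem_filter, Finset.mem_range]
      exact ⟨hLpos, by rw [h0]; exact hx0⟩
    set l : ℕ := F.max' ⟨0, h0F⟩ with hl
    have hlF : l ∈ F := F.max'_mem _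
    simp only [hF, Finset.mem_filter, Finset.mem_range] at hlF
    refine ⟨l, hlF.1, hlF.2, ?_⟩
    by_contra hcon
    push_neg at hcon
    rcases Nat.lt_or_ge (l+1) L with h | h
    · have : l + 1 ∈ F := by
        simp only [hF, Finset.mem_filter, Finset.mem_range]
        exact ⟨h, hcon⟩
      have := F.le_max' _ this
      omega
    · have hLl : L = l + 1 := by omega
      rw [← hLl] at hcon
      linarith
  have hbdd : ∀ x : ℝ, 0 ≤ x → x ≤ 1 → |d x| ≤ D := by
    intro x hx0 hx1
    have key : ∃ k, k ≤ L + 1 ∧ |d x - d (π k)| ≤ (CN : ℝ) * 1 := by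
      rcases le_or_gt (π L) x with h | h
      · refine ⟨L, by omega, ?_⟩
        have := hdistL x ⟨h, hx1⟩ (π L) ⟨le_rfl, hπL1⟩
        refine this.trans (mul_le_mul_of_nonneg_left ?_ hC0)
        rw [abs_of_nonneg (by linarith)]
        have := hnn L (by omega)
        linarith
      · obtain ⟨l, hlL, hl1, hl2⟩ := hloc x hx0 h
        refine ⟨l, by omega, ?_⟩
        have := hdistl l hlL x ⟨hl1, hl2⟩ (π l) ⟨le_rfl, hlt l (by omega)⟩
        refine this.trans (mul_le_mul_of_nonneg_left ?_ hC0)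
        rw [abs_of_nonneg (by linarith)]
        have := hnn l (by omega)
        linarith
    obtain ⟨k, hk, hkb⟩ := key
    have hmem : k ∈ Finset.range (L+2) := Finset.mem_range.mpr (by omega)
    have hsup : |d (π k)| ≤ D0 := Finset.le_sup' (fun k => |d (π k)|) hmem
    calc |d x| = |(d x - d (π k)) + d (π k)| := by ring_nf
      _ ≤ |d x - d (π k)| + |d (π k)| := abs_add_le _ _
      _ ≤ (CN : ℝ) * 1 + D0 := add_le_add hkb hsup
      _ = D := by rw [hDdef]; ring
  -- within-piece step bound
  have hpiece : ∀ x y : ℝ, 0 ≤ x → x ≤ y → y ≤ 1 →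
      (∀ l, 1 ≤ l → l ≤ L + 1 → ¬(x < π l ∧ π l ≤ y)) →
      |d y - d x| ≤ (CN : ℝ) * (y - x) := by
    intro x y hx0 hxy hy1 hno
    rcases le_or_gt (π L) x with h | h
    · have := hdistL y ⟨le_trans h hxy, hy1⟩ x ⟨h, le_trans hxy hy1⟩
      rwa [abs_of_nonneg (sub_nonneg.mpr hxy)] at this
    · obtain ⟨l, hlL, hl1, hl2⟩ := hloc x hx0 h
      have hylt : y < π (l+1) := by
        by_contra hy
        exact hno (l+1) (by omega) (by omega) ⟨hl2, not_lt.1 hy⟩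
      have := hdistl l hlL y ⟨le_trans hl1 hxy, hylt⟩ x ⟨hl1, hl2⟩
      rwa [abs_of_nonneg (sub_nonneg.mpr hxy)] at this
  -- total variation bound
  set K : ℝ := (CN : ℝ) + 2 * D * (L + 1) with hKdef
  have hKnn : 0 ≤ K := by
    have : (0:ℝ) ≤ 2 * D * (L+1) := by positivity
    linarith
  have hvar : ∀ T : ℕ, 1 ≤ T →
      ∑ t ∈ Finset.Icc 2 T, |d ((t : ℝ) / T) - d (((t - 1 : ℕ) : ℝ) / T)| ≤ K := by
    intro T hT
    have hT0 : (0:ℝ) < T := by exact_mod_cast hT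
    set P : ℕ → Prop := fun t => ∃ l, 1 ≤ l ∧ l ≤ L + 1 ∧
      ((t : ℝ) - 1) / T < π l ∧ π l ≤ (t : ℝ) / T with hP
    have hcast : ∀ t ∈ Finset.Icc 2 T, ((t - 1 : ℕ) : ℝ) = (t : ℝ) - 1 := by
      intro t ht
      rw [Finset.mem_Icc] at ht
      have : 1 ≤ t := by omega
      push_cast [Nat.cast_sub this]
      ring
    have hx0 : ∀ t ∈ Finset.Icc 2 T, (0:ℝ) ≤ ((t : ℝ) - 1) / T := by
      intro t ht
      rw [Finset.mem_Icc] at ht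
      have : (2:ℝ) ≤ t := by exact_mod_cast ht.1
      apply div_nonneg (by linarith) hT0.le
    have hxy : ∀ t : ℕ, ((t : ℝ) - 1) / T ≤ (t : ℝ) / T := by
      intro t
      gcongr
      linarith
    have hy1 : ∀ t ∈ Finset.Icc 2 T, (t : ℝ) / T ≤ 1 := by
      intro t ht
      rw [Finset.mem_Icc] at ht
      rw [div_le_one hT0]
      exact_mod_cast ht.2
    have hterm2 : ∀ t ∈ Finset.Icc 2 T,
        |d ((t : ℝ) / T) - d (((t - 1 : ℕ) : ℝ) / T)| ≤ 2 * D := by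
      intro t ht
      rw [hcast t ht]
      have h1' := hbdd ((t : ℝ) / T) (by positivity) (hy1 t ht)
      have h2' := hbdd (((t : ℝ) - 1) / T) (hx0 t ht) (le_trans (hxy t) (hy1 t ht))
      calc |d ((t : ℝ) / T) - d (((t : ℝ) - 1) / T)|
          ≤ |d ((t : ℝ) / T)| + |d (((t : ℝ) - 1) / T)| := abs_sub _ _
        _ ≤ 2 * D := by linarith
    have hterm1 : ∀ t ∈ Finset.Icc 2 T, ¬ P t →
        |d ((t : ℝ) / T) - d (((t - 1 : ℕ) : ℝ) / T)| ≤ (CN : ℝ) / T := by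
      intro t ht hnp
      rw [hcast t ht]
      have hno : ∀ l, 1 ≤ l → l ≤ L + 1 →
          ¬(((t : ℝ) - 1) / T < π l ∧ π l ≤ (t : ℝ) / T) := by
        intro l hl1 hl2 hc
        exact hnp ⟨l, hl1, hl2, hc⟩
      have := hpiece (((t : ℝ) - 1) / T) ((t : ℝ) / T) (hx0 t ht) (hxy t) (hy1 t ht) hno
      refine this.trans (le_of_eq ?_)
      field_simp
      ring
    rw [← Finset.sum_filter_add_sum_filter_not (Finset.Icc 2 T) P]
    have hcard : ((Finset.Icc 2 T).filter P).card ≤ L + 1 := by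
      set f : ℕ → ℕ := fun t => if h : P t then Classical.choose h else 0 with hf
      have hcc : ((Finset.Icc 1 (L+1))).card = L + 1 := by
        rw [Nat.card_Icc]; omega
      rw [← hcc]
      apply Finset.card_le_card_of_injOn f
      · intro t ht
        rw [Finset.mem_coe, Finset.mem_filter] at ht
        have hPt := ht.2
        simp only [hf, dif_pos hPt]
        obtain ⟨h1', h2', _, _⟩ := Classical.choose_spec hPt
        exact Finset.mem_Icc.mpr ⟨h1', h2'⟩
      · intro t ht t' ht' hft
        simp only [Finset.coe_filter, Set.mem_setOf_eq] at ht ht'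
        have hPt := ht.2
        have hPt' := ht'.2
        simp only [hf, dif_pos hPt, dif_pos hPt'] at hft
        obtain ⟨_, _, ha1, ha2⟩ := Classical.choose_spec hPt
        obtain ⟨_, _, hb1, hb2⟩ := Classical.choose_spec hPt'
        rw [hft] at ha1 ha2
        -- π l in both (x_t, y_t] and (x_t', y_t']
        have h1' : (t' : ℝ) - 1 < t := by
          have := lt_of_lt_of_le hb1 ha2
          exact (div_lt_div_iff_of_pos_right hT0).mp this
        have h2' : (t : ℝ) - 1 < t' := by
          have := lt_of_lt_of_le ha1 hb2
          exact (div_lt_div_iff_of_pos_right hT0).mp this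
        have : t' < t + 1 := by exact_mod_cast (by linarith : (t' : ℝ) < t + 1)
        have : t < t' + 1 := by exact_mod_cast (by linarith : (t : ℝ) < t' + 1)
        omega
    have hpart1 : ∑ t ∈ (Finset.Icc 2 T).filter P,
        |d ((t : ℝ) / T) - d (((t - 1 : ℕ) : ℝ) / T)| ≤ 2 * D * (L + 1) := by
      calc ∑ t ∈ (Finset.Icc 2 T).filter P,
            |d ((t : ℝ) / T) - d (((t - 1 : ℕ) : ℝ) / T)|
          ≤ ∑ _t ∈ (Finset.Icc 2 T).filter P, 2 * D := by
            apply Finset.sum_le_sum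
            intro t ht
            exact hterm2 t (Finset.mem_filter.mp ht).1
        _ = ((Finset.Icc 2 T).filter P).card * (2 * D) := by
            rw [Finset.sum_const, nsmul_eq_mul]
        _ ≤ (L + 1) * (2 * D) := by
            apply mul_le_mul_of_nonneg_right _ (by linarith)
            exact_mod_cast hcard
        _ = 2 * D * (L + 1) := by ring
    have hpart2 : ∑ t ∈ (Finset.Icc 2 T).filter (fun t => ¬ P t),
        |d ((t : ℝ) / T) - d (((t - 1 : ℕ) : ℝ) / T)| ≤ (CN : ℝ) := by
      calc ∑ t ∈ (Finset.Icc 2 T).filter (fun t => ¬ P t),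
            |d ((t : ℝ) / T) - d (((t - 1 : ℕ) : ℝ) / T)|
          ≤ ∑ _t ∈ (Finset.Icc 2 T).filter (fun t => ¬ P t), (CN : ℝ) / T := by
            apply Finset.sum_le_sum
            intro t ht
            rw [Finset.mem_filter] at ht
            exact hterm1 t ht.1 ht.2
        _ = ((Finset.Icc 2 T).filter (fun t => ¬ P t)).card * ((CN : ℝ) / T) := by
            rw [Finset.sum_const, nsmul_eq_mul]
        _ ≤ (T : ℝ) * ((CN : ℝ) / T) := by
            apply mul_le_mul_of_nonneg_right _ (by positivity)
            have h1' : ((Finset.Icc 2 T).filter (fun t => ¬ P t)).card ≤ T := by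
              calc ((Finset.Icc 2 T).filter (fun t => ¬ P t)).card
                  ≤ (Finset.Icc 2 T).card := Finset.card_filter_le _ _
                _ ≤ T := by rw [Nat.card_Icc]; omega
            exact_mod_cast h1'
        _ = (CN : ℝ) := by field_simp
    refine le_trans (add_le_add hpart1 hpart2) ?_
    rw [hKdef]
    linarith
  -- main argument
  refine ⟨K * K, ?_⟩
  intro B T hB hBT s hs1 hsB
  have hT1 : 1 ≤ T := by omega
  let a : ℕ → ℝ := fun t => d ((t : ℝ) / (T : ℝ)) - d (((t - 1 : ℕ) : ℝ) / (T : ℝ))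
  have hsub : ∀ j lo hi : ℕ, 2 ≤ lo + j → hi + j ≤ T →
      ∑ r ∈ Finset.Icc lo hi, |a (r + j)| ≤ ∑ t ∈ Finset.Icc 2 T, |a t| := by
    intro j lo hi h2 hTj
    have himg : ∑ r ∈ Finset.Icc lo hi, |a (r + j)|
        = ∑ t ∈ (Finset.Icc lo hi).image (· + j), |a t| := by
      rw [Finset.sum_image]
      intro x _ y _ h
      simp only at h
      omega
    rw [himg]
    apply Finset.sum_le_sum_of_subset_of_nonneg
    · intro t ht
      simp only [Finset.mem_image, Finset.mem_Icc] at ht ⊢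
      obtain ⟨r, hr, hrt⟩ := ht
      omega
    · intro t _ _
      exact abs_nonneg _
  have hvarT := hvar T hT1
  have hvarT' : ∑ t ∈ Finset.Icc 2 T, |a t| ≤ K := hvarT
  calc ∑ r ∈ Finset.Icc 1 B,
          |∑ j ∈ Finset.Icc 1 (T - B),
            (d (((r + j : ℕ) : ℝ) / (T : ℝ)) - d (((r + j - 1 : ℕ) : ℝ) / (T : ℝ))) *
              (d (((s + j : ℕ) : ℝ) / (T : ℝ)) - d (((s + j - 1 : ℕ) : ℝ) / (T : ℝ)))|
      = ∑ r ∈ Finset.Icc 1 B, |∑ j ∈ Finset.Icc 1 (T - B), a (r + j) * a (s + j)| := rfl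
    _ ≤ ∑ r ∈ Finset.Icc 1 B, ∑ j ∈ Finset.Icc 1 (T - B), |a (r + j)| * |a (s + j)| := by
        apply Finset.sum_le_sum
        intro r _
        refine (Finset.abs_sum_le_sum_abs _ _).trans (le_of_eq ?_)
        apply Finset.sum_congr rfl
        intro j _
        rw [abs_mul]
    _ = ∑ j ∈ Finset.Icc 1 (T - B), ∑ r ∈ Finset.Icc 1 B, |a (r + j)| * |a (s + j)| :=
        Finset.sum_comm
    _ = ∑ j ∈ Finset.Icc 1 (T - B), (∑ r ∈ Finset.Icc 1 B, |a (r + j)|) * |a (s + j)| := by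
        apply Finset.sum_congr rfl
        intro j _
        rw [Finset.sum_mul]
    _ ≤ ∑ j ∈ Finset.Icc 1 (T - B), K * |a (s + j)| := by
        apply Finset.sum_le_sum
        intro j hj
        rw [Finset.mem_Icc] at hj
        apply mul_le_mul_of_nonneg_right _ (abs_nonneg _)
        exact (hsub j 1 B (by omega) (by omega)).trans hvarT'
    _ = K * ∑ j ∈ Finset.Icc 1 (T - B), |a (s + j)| := by rw [Finset.mul_sum]
    _ ≤ K * K := by
        apply mul_le_mul_of_nonneg_left _ hKnn
        have heq : ∑ j ∈ Finset.Icc 1 (T - B), |a (s + j)|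
            = ∑ j ∈ Finset.Icc 1 (T - B), |a (j + s)| := by
          apply Finset.sum_congr rfl
          intro j _
          rw [Nat.add_comm]
        rw [heq]
        exact (hsub s 1 (T - B) (by omega) (by omega)).trans hvarT'
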